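/- For fixed T > 0 and k ∈ ℝ, the function Δ ↦ K_T^Δ(k)/Δ², where K_T^Δ(k) = √(k² + Δ²)/tanh(√(k² + Δ²)/(2T)), is decreasing in Δ on (0, ∞). -/

import Mathlib

/-- `K_T^Δ(k) = √(k² + Δ²)/tanh(√(k² + Δ²)/(2T))`. -/
noncomputable def KTDelta (T k Δ : ℝ) : ℝ :=
  Real.sqrt (k ^ 2 + Δ ^ 2) / Real.tanh (Real.sqrt (k ^ 2 + Δ ^ 2) / (2 * T))

lemma tanh_pos_aux {x : ℝ} (hx : 0 < x) : 0 < Real.tanh x := by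
  rw [Real.tanh_eq_sinh_div_cosh]
  exact div_pos (Real.sinh_pos_iff.2 hx) (Real.cosh_pos x)

lemma tanh_mono_aux {x y : ℝ} (hxy : x ≤ y) : Real.tanh x ≤ Real.tanh y := by
  rw [Real.tanh_eq_sinh_div_cosh, Real.tanh_eq_sinh_div_cosh,
    div_le_div_iff₀ (Real.cosh_pos x) (Real.cosh_pos y)]
  nlinarith [Real.sinh_sub y x, Real.sinh_nonneg_iff.2 (sub_nonneg.2 hxy)]

/-- For fixed `T > 0` and `k ∈ ℝ`, the function `Δ ↦ K_T^Δ(k)/Δ²` is decreasing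
in `Δ` on `(0, ∞)`. -/
theorem KOverDeltaSq_antitone (T k : ℝ) (hT : 0 < T) :
    AntitoneOn (fun Δ : ℝ => KTDelta T k Δ / Δ ^ 2) (Set.Ioi (0 : ℝ)) := by
  have key : ∀ Δ : ℝ, 0 < Δ →
      KTDelta T k Δ / Δ ^ 2 = (1 + k ^ 2 / Δ ^ 2) *
        (1 / (Real.sqrt (k ^ 2 + Δ ^ 2) *
          Real.tanh (Real.sqrt (k ^ 2 + Δ ^ 2) / (2 * T)))) := by
    intro Δ hΔ
    have hE : 0 < Real.sqrt (k ^ 2 + Δ ^ 2) := Real.sqrt_pos.2 (by positivity)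
    have ht : 0 < Real.tanh (Real.sqrt (k ^ 2 + Δ ^ 2) / (2 * T)) :=
      tanh_pos_aux (by positivity)
    have hsq : Real.sqrt (k ^ 2 + Δ ^ 2) ^ 2 = k ^ 2 + Δ ^ 2 :=
      Real.sq_sqrt (by positivity)
    unfold KTDelta
    field_simp
    linear_combination hsq
  intro a ha b hb hab
  simp only [Set.mem_Ioi] at ha hb
  simp only
  rw [key a ha, key b hb]
  have hEa : 0 < Real.sqrt (k ^ 2 + a ^ 2) := Real.sqrt_pos.2 (by positivity)
  have hta : 0 < Real.tanh (Real.sqrt (k ^ 2 + a ^ 2) / (2 * T)) :=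
    tanh_pos_aux (by positivity)
  have htb : 0 < Real.tanh (Real.sqrt (k ^ 2 + b ^ 2) / (2 * T)) :=
    tanh_pos_aux (by positivity)
  have hEab : Real.sqrt (k ^ 2 + a ^ 2) ≤ Real.sqrt (k ^ 2 + b ^ 2) :=
    Real.sqrt_le_sqrt (by nlinarith)
  have htab : Real.tanh (Real.sqrt (k ^ 2 + a ^ 2) / (2 * T)) ≤
      Real.tanh (Real.sqrt (k ^ 2 + b ^ 2) / (2 * T)) :=
    tanh_mono_aux ((div_le_div_iff_of_pos_right (by positivity)).2 hEab)
  apply mul_le_mul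
  · have : k ^ 2 / b ^ 2 ≤ k ^ 2 / a ^ 2 :=
      div_le_div_of_nonneg_left (by positivity) (by positivity) (by nlinarith)
    linarith
  · apply one_div_le_one_div_of_le (by positivity)
    exact mul_le_mul hEab htab hta.le (Real.sqrt_nonneg _)
  · positivity
  · positivity
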